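/- arXiv:1810.11095 — 3 statements merged into one kernel-verified Lean document; each statement's English description precedes it below -/
import Mathlib

section
/- For Lebesgue-almost every α in (0,1), the series ∑_{k=2}^∞ 1/(a_k(α) a_{k−1}(α)) diverges, where a_k(α) are the continued fraction partial quotients of α. -/
open scoped BigOperators

/-- The Gauss map `G(x) = 1/x - ⌊1/x⌋`. -/
noncomputable def gaussMap (x : ℝ) : ℝ := Int.fract (1 / x)

/-- The partial quotients of the continued fraction of `α`:
`a 0 = ⌊α⌋` and `a k = ⌊1 / G^[k-1] (fract α)⌋` for `k ≥ 1`. -/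
noncomputable def cfA (α : ℝ) : ℕ → ℤ
  | 0 => ⌊α⌋
  | k + 1 => ⌊1 / (gaussMap^[k] (Int.fract α))⌋

/-- Numerators of the convergents: `p 0 = 1`, `p 1 = a 0`,
`p k = a (k-1) * p (k-1) + p (k-2)`. -/
noncomputable def cfP (α : ℝ) : ℕ → ℤ
  | 0 => 1
  | 1 => cfA α 0
  | k + 2 => cfA α (k + 1) * cfP α (k + 1) + cfP α k

/-- Denominators of the convergents: `q 0 = 0`, `q 1 = 1`,
`q k = a (k-1) * q (k-1) + q (k-2)`. -/
noncomputable def cfQ (α : ℝ) : ℕ → ℤ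
  | 0 => 0
  | 1 => 1
  | k + 2 => cfA α (k + 1) * cfQ α (k + 1) + cfQ α k

/-- `ζ k = |q k * α - p k|`. -/
noncomputable def cfZeta (α : ℝ) (k : ℕ) : ℝ := |(cfQ α k : ℝ) * α - (cfP α k : ℝ)|

/-- `ε k = |α - p k / q k|`. -/
noncomputable def cfEps (α : ℝ) (k : ℕ) : ℝ := |α - (cfP α k : ℝ) / (cfQ α k : ℝ)|

open MeasureTheory Set

namespace AEDiv

/-- denominator of the depth-2 inverse branch -/
def den (a b : ℕ) (y : ℝ) : ℝ := ((a : ℝ) + 1) * (((b : ℝ) + 1) + y) + 1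

/-- depth-2 inverse branch of the Gauss map, digits `a+1`, `b+1` -/
noncomputable def psi (a b : ℕ) (y : ℝ) : ℝ := (((b : ℝ) + 1) + y) / den a b y

variable {a b : ℕ} {y u v : ℝ}

lemma den_pos (hy : 0 ≤ y) : 0 < den a b y := by
  have ha : (0:ℝ) ≤ (a:ℝ) := Nat.cast_nonneg a
  have hb : (0:ℝ) ≤ (b:ℝ) := Nat.cast_nonneg b
  unfold den; nlinarith

lemma den_ge_two (hy : 0 ≤ y) : 2 ≤ den a b y := by
  have ha : (0:ℝ) ≤ (a:ℝ) := Nat.cast_nonneg a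
  have hb : (0:ℝ) ≤ (b:ℝ) := Nat.cast_nonneg b
  unfold den; nlinarith

lemma psi_sub (hu : 0 ≤ u) (hv : 0 ≤ v) :
    psi a b u - psi a b v = (u - v) / (den a b u * den a b v) := by
  have h1 := den_pos (a := a) (b := b) hu
  have h2 := den_pos (a := a) (b := b) hv
  unfold psi den at *
  field_simp
  ring

lemma psi_mem (hy : y ∈ Ioo (0:ℝ) 1) : psi a b y ∈ Ioo (0:ℝ) 1 := by
  have h1 := den_pos (a := a) (b := b) hy.1.le
  have hb : (0:ℝ) ≤ (b:ℝ) := Nat.cast_nonneg b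
  have ha : (0:ℝ) ≤ (a:ℝ) := Nat.cast_nonneg a
  have hy0 := hy.1
  constructor
  · apply div_pos (by nlinarith) h1
  · rw [psi, div_lt_one h1]; unfold den; nlinarith

lemma psi_hasDeriv (hy : 0 ≤ y) :
    HasDerivAt (psi a b) (1 / (den a b y)^2) y := by
  have h1 := den_pos (a := a) (b := b) hy
  have hd : HasDerivAt (fun z => den a b z) ((a:ℝ)+1) y := by
    unfold den
    simpa using (((hasDerivAt_id y).const_add (((b:ℝ)+1))).const_mul (((a:ℝ)+1))).add_const 1
  have hn : HasDerivAt (fun z => ((b:ℝ)+1) + z) 1 y := by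
    simpa using (hasDerivAt_id y).const_add (((b:ℝ)+1))
  have := hn.div hd h1.ne'
  refine this.congr_deriv ?_
  unfold den
  field_simp
  ring

lemma psi_injOn : InjOn (psi a b) (Ioo (0:ℝ) 1) := by
  intro x hx z hz h
  have := psi_sub (a := a) (b := b) hx.1.le hz.1.le
  rw [h, sub_self] at this
  have h1 := den_pos (a := a) (b := b) hx.1.le
  have h2 := den_pos (a := a) (b := b) hz.1.le
  have := this.symm
  rw [div_eq_zero_iff] at this
  rcases this with h' | h'
  · linarith [sub_eq_zero.mp h']
  · nlinarith

lemma psi_contract (hu : 0 ≤ u) (hv : 0 ≤ v) :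
    |psi a b u - psi a b v| ≤ |u - v| / 4 := by
  rw [psi_sub hu hv, abs_div]
  have h1 := den_ge_two (a := a) (b := b) hu
  have h2 := den_ge_two (a := a) (b := b) hv
  have h4 : (4:ℝ) ≤ |den a b u * den a b v| := by
    rw [abs_of_pos (by nlinarith)]; nlinarith
  apply div_le_div_of_nonneg_left (abs_nonneg _) (by norm_num) h4 |>.trans
  · exact le_refl _

lemma den_ratio (hu : 0 ≤ u) (hv : 0 ≤ v) :
    den a b v ≤ (1 + |u - v|) * den a b u := by
  have h1 := den_ge_two (a := a) (b := b) hu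
  have ha : (0:ℝ) ≤ (a:ℝ) := Nat.cast_nonneg a
  have hav : den a b v = den a b u + ((a:ℝ)+1) * (v - u) := by unfold den; ring
  have habs : v - u ≤ |u - v| := by rw [abs_sub_comm]; exact le_abs_self _
  have hden : ((a:ℝ)+1) ≤ den a b u := by unfold den; nlinarith
  have h0 : (0:ℝ) ≤ |u-v| := abs_nonneg _
  nlinarith

end AEDiv

namespace AEDiv
open MeasureTheory Set
variable {a b : ℕ} {y u v : ℝ}

lemma B_add_pos (hy : y ∈ Ioo (0:ℝ) 1) : 1 < ((b:ℝ)+1) + y := by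
  have hb : (0:ℝ) ≤ (b:ℝ) := Nat.cast_nonneg b
  have := hy.1; linarith

lemma one_div_psi (hy : y ∈ Ioo (0:ℝ) 1) :
    1 / psi a b y = ((a:ℝ)+1) + 1 / (((b:ℝ)+1) + y) := by
  have hB := B_add_pos (b := b) hy
  have h1 := den_pos (a := a) (b := b) hy.1.le
  rw [psi, one_div_div, den]
  field_simp

lemma fract_psi (hy : y ∈ Ioo (0:ℝ) 1) : Int.fract (psi a b y) = psi a b y :=
  Int.fract_eq_self.mpr ⟨(psi_mem hy).1.le, (psi_mem hy).2⟩

lemma inv_B_mem (hy : y ∈ Ioo (0:ℝ) 1) : 1 / (((b:ℝ)+1) + y) ∈ Ioo (0:ℝ) 1 := by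
  have hB := B_add_pos (b := b) hy
  constructor
  · positivity
  · rw [div_lt_one (by linarith)]; linarith

lemma cfA_one_psi (hy : y ∈ Ioo (0:ℝ) 1) : cfA (psi a b y) 1 = (a:ℤ) + 1 := by
  show ⌊1 / (gaussMap^[0] (Int.fract (psi a b y)))⌋ = (a:ℤ) + 1
  rw [Function.iterate_zero_apply, fract_psi hy, one_div_psi hy]
  have h := inv_B_mem (b := b) hy
  have : ((a:ℝ)+1) = (((a:ℤ)+1 : ℤ) : ℝ) := by push_cast; ring
  rw [this, Int.floor_intCast_add]
  rw [Int.floor_eq_zero_iff.mpr ⟨h.1.le, h.2⟩, add_zero]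

lemma gauss_psi (hy : y ∈ Ioo (0:ℝ) 1) :
    gaussMap (psi a b y) = 1 / (((b:ℝ)+1) + y) := by
  rw [gaussMap, one_div_psi hy]
  have h := inv_B_mem (b := b) hy
  have : ((a:ℝ)+1) = (((a:ℤ)+1 : ℤ) : ℝ) := by push_cast; ring
  rw [this, Int.fract_intCast_add, Int.fract_eq_self.mpr ⟨h.1.le, h.2⟩]

lemma gauss2_psi (hy : y ∈ Ioo (0:ℝ) 1) : gaussMap^[2] (psi a b y) = y := by
  have hB := B_add_pos (b := b) hy
  show gaussMap (gaussMap (psi a b y)) = y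
  rw [gauss_psi hy, gaussMap, one_div_one_div]
  have : (((b:ℝ)+1) + y) = (((b:ℤ)+1 : ℤ) : ℝ) + y := by push_cast; ring
  rw [this, Int.fract_intCast_add, Int.fract_eq_self.mpr ⟨hy.1.le, hy.2⟩]

lemma cfA_two_psi (hy : y ∈ Ioo (0:ℝ) 1) : cfA (psi a b y) 2 = (b:ℤ) + 1 := by
  show ⌊1 / (gaussMap^[1] (Int.fract (psi a b y)))⌋ = (b:ℤ) + 1
  rw [Function.iterate_one, fract_psi hy, gauss_psi hy, one_div_one_div]
  have : (((b:ℝ)+1) + y) = (((b:ℤ)+1 : ℤ) : ℝ) + y := by push_cast; ring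
  rw [this, Int.floor_intCast_add, Int.floor_eq_zero_iff.mpr ⟨hy.1.le, hy.2⟩, add_zero]

lemma cfA_shift_psi (hy : y ∈ Ioo (0:ℝ) 1) (i : ℕ) :
    cfA (psi a b y) (i + 3) = cfA y (i + 1) := by
  show ⌊1 / (gaussMap^[i+2] (Int.fract (psi a b y)))⌋ = ⌊1 / (gaussMap^[i] (Int.fract y))⌋
  rw [fract_psi hy, Int.fract_eq_self.mpr ⟨hy.1.le, hy.2⟩,
    Function.iterate_add_apply, gauss2_psi hy]

/-- irrationality transfers through the inverse branch -/
lemma psi_irrational (hy : y ∈ Ioo (0:ℝ) 1) (hirr : Irrational y) :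
    Irrational (psi a b y) := by
  have hB := B_add_pos (b := b) hy
  have h1 : Irrational (((b:ℝ)+1) + y) := by
    have : (((b:ℝ)+1) : ℝ) = ((b+1 : ℕ) : ℝ) := by push_cast; ring
    rw [this, add_comm]; exact hirr.add_natCast _
  have h2 : Irrational (1 / (((b:ℝ)+1) + y)) := by
    rw [one_div]; exact h1.inv
  have h3 : Irrational (((a:ℝ)+1) + 1 / (((b:ℝ)+1) + y)) := by
    have : ((a:ℝ)+1) = ((a+1 : ℕ) : ℝ) := by push_cast; ring
    rw [this, add_comm]; exact h2.add_natCast _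
  have h4 : Irrational (1 / (((a:ℝ)+1) + 1 / (((b:ℝ)+1) + y))) := by
    rw [one_div]; exact h3.inv
  have : psi a b y = 1 / (((a:ℝ)+1) + 1 / (((b:ℝ)+1) + y)) := by
    rw [← one_div_psi hy, one_div_one_div]
  rw [this]; exact h4

end AEDiv

namespace AEDiv
open MeasureTheory Set
variable {a b : ℕ} {x y u v : ℝ}

lemma gauss_step (hx : x ∈ Ioo (0:ℝ) 1) (hirr : Irrational x) :
    ∃ c : ℕ, gaussMap x ∈ Ioo (0:ℝ) 1 ∧ Irrational (gaussMap x) ∧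
      x = 1 / (((c:ℝ)+1) + gaussMap x) ∧ ⌊1/x⌋ = (c:ℤ) + 1 := by
  have hx0 := hx.1
  have hinv : Irrational (1/x) := by rw [one_div]; exact hirr.inv
  have hfr : Irrational (gaussMap x) := by
    rw [gaussMap, Int.fract]; exact hinv.sub_intCast _
  have hone : 1 < 1/x := by rw [lt_div_iff₀ hx0]; linarith [hx.2]
  have hfl : 1 ≤ ⌊1/x⌋ := by
    rw [Int.le_floor]; push_cast; exact hone.le
  refine ⟨(⌊1/x⌋ - 1).toNat, ⟨?_, ?_⟩, hfr, ?_, ?_⟩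
  · rcases lt_or_eq_of_le (Int.fract_nonneg (1/x)) with h | h
    · exact h
    · exfalso; exact hfr (by rw [gaussMap, ← h]; exact ⟨0, by norm_num⟩)
  · exact Int.fract_lt_one _
  · have hc : ((((⌊1/x⌋ - 1).toNat : ℕ) : ℝ) + 1) = (⌊1/x⌋ : ℝ) := by
      have : ((⌊1/x⌋ - 1).toNat : ℤ) = ⌊1/x⌋ - 1 := Int.toNat_of_nonneg (by omega)
      have := congrArg (fun z : ℤ => (z : ℝ)) this
      push_cast at this ⊢; linarith
    rw [hc, gaussMap, Int.fract]
    have : (⌊1/x⌋ : ℝ) + (1/x - ⌊1/x⌋) = 1/x := by ring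
    rw [this, one_div_one_div]
  · have : ((⌊1/x⌋ - 1).toNat : ℤ) = ⌊1/x⌋ - 1 := Int.toNat_of_nonneg (by omega)
    omega

lemma decomp (hx : x ∈ Ioo (0:ℝ) 1) (hirr : Irrational x) :
    ∃ a b : ℕ, ∃ y ∈ Ioo (0:ℝ) 1, Irrational y ∧ x = psi a b y ∧
      gaussMap^[2] x = y := by
  obtain ⟨c, hG1, hGirr, hxeq, _⟩ := gauss_step hx hirr
  obtain ⟨d, hG2, hG2irr, hGeq, _⟩ := gauss_step hG1 hGirr
  set z := gaussMap (gaussMap x) with hz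
  refine ⟨c, d, z, hG2, hG2irr, ?_, rfl⟩
  have hB : 1 < ((d:ℝ)+1) + z := B_add_pos hG2
  have hden := den_pos (a := c) (b := d) hG2.1.le
  rw [hxeq, hGeq, psi]
  rw [div_eq_div_iff (by positivity : ((c:ℝ)+1) + 1/(((d:ℝ)+1)+z) ≠ 0) hden.ne']
  unfold den
  have h1 : ((d:ℝ)+1) + z ≠ 0 := by linarith
  field_simp
  try ring

end AEDiv

namespace AEDiv
open MeasureTheory Set
variable {a b : ℕ} {x y u v : ℝ}

/-- the bad sets: no pattern `(1,1)` at positions `2i+1, 2i+2` for `i ∈ [N, N+m)` -/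
def SS (N m : ℕ) : Set ℝ :=
  {x | x ∈ Ioo (0:ℝ) 1 ∧ Irrational x ∧
    ∀ i, N ≤ i → i < N + m → ¬(cfA x (2*i+1) = 1 ∧ cfA x (2*i+2) = 1)}

lemma SS_subset (N m : ℕ) : SS N m ⊆ Ioo (0:ℝ) 1 := fun _ h => h.1

lemma measurable_gaussMap : Measurable gaussMap :=
  measurable_fract.comp (measurable_const.div measurable_id)

lemma measurable_cfA (n : ℕ) : Measurable fun x => cfA x n := by
  cases n with
  | zero => exact Int.measurable_floor
  | succ k =>
    show Measurable fun x => ⌊1 / (gaussMap^[k] (Int.fract x))⌋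
    apply Int.measurable_floor.comp
    exact (measurable_const.div ((measurable_gaussMap.iterate k).comp measurable_fract))

lemma measurable_irrational : MeasurableSet {x : ℝ | Irrational x} := by
  have : {x : ℝ | Irrational x} = (Set.range ((↑) : ℚ → ℝ))ᶜ := rfl
  rw [this]
  exact (Set.countable_range _).measurableSet.compl

lemma measurable_SS (N m : ℕ) : MeasurableSet (SS N m) := by
  have h1 : SS N m = (Ioo (0:ℝ) 1) ∩ {x | Irrational x} ∩
      ⋂ i : ℕ, {x : ℝ | N ≤ i → i < N + m → ¬(cfA x (2*i+1) = 1 ∧ cfA x (2*i+2) = 1)} := by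
    ext x
    simp only [SS, mem_inter_iff, mem_iInter, mem_setOf_eq]
    tauto
  rw [h1]
  apply (measurableSet_Ioo.inter measurable_irrational).inter
  apply MeasurableSet.iInter
  intro i
  by_cases hi : N ≤ i ∧ i < N + m
  · have : {x : ℝ | N ≤ i → i < N + m → ¬(cfA x (2*i+1) = 1 ∧ cfA x (2*i+2) = 1)}
        = ({x : ℝ | cfA x (2*i+1) = 1} ∩ {x : ℝ | cfA x (2*i+2) = 1})ᶜ := by
      ext x; simp only [mem_setOf_eq, mem_compl_iff, mem_inter_iff]; tauto
    rw [this]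
    exact (((measurable_cfA (2*i+1)) (measurableSet_singleton 1)).inter
      ((measurable_cfA (2*i+2)) (measurableSet_singleton 1))).compl
  · have : {x : ℝ | N ≤ i → i < N + m → ¬(cfA x (2*i+1) = 1 ∧ cfA x (2*i+2) = 1)} = univ := by
      ext x; simp only [mem_setOf_eq, mem_univ, iff_true]; tauto
    rw [this]; exact MeasurableSet.univ

lemma SS_succ_left (N m : ℕ) :
    SS (N+1) m = ⋃ p : ℕ × ℕ, psi p.1 p.2 '' SS N m := by
  ext x
  constructor
  · rintro ⟨hxI, hxirr, hcond⟩
    obtain ⟨a, b, y, hyI, hyirr, hxy, _⟩ := decomp hxI hxirr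
    refine mem_iUnion.mpr ⟨(a, b), y, ⟨hyI, hyirr, ?_⟩, hxy.symm⟩
    intro i hNi him
    have e1 : cfA y (2*i+1) = cfA x (2*(i+1)+1) := by
      rw [hxy]
      have h := (cfA_shift_psi (a := a) (b := b) hyI (2*i)).symm
      have e : 2*i+3 = 2*(i+1)+1 := by ring
      rwa [e] at h
    have e2 : cfA y (2*i+2) = cfA x (2*(i+1)+2) := by
      rw [hxy]
      have h := (cfA_shift_psi (a := a) (b := b) hyI (2*i+1)).symm
      have e : 2*i+1+3 = 2*(i+1)+2 := by ring
      rwa [e] at h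
    rw [e1, e2]
    exact hcond (i+1) (by omega) (by omega)
  · intro hx
    obtain ⟨⟨a, b⟩, y, ⟨hyI, hyirr, hcond⟩, hxy⟩ := mem_iUnion.mp hx
    subst hxy
    refine ⟨psi_mem hyI, psi_irrational hyI hyirr, ?_⟩
    intro i hNi him
    obtain ⟨j, rfl⟩ : ∃ j, i = j + 1 := ⟨i - 1, by omega⟩
    have e1 : cfA (psi a b y) (2*(j+1)+1) = cfA y (2*j+1) := by
      have h := cfA_shift_psi (a := a) (b := b) hyI (2*j)
      have e : 2*j+3 = 2*(j+1)+1 := by ring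
      rwa [e] at h
    have e2 : cfA (psi a b y) (2*(j+1)+2) = cfA y (2*j+2) := by
      have h := cfA_shift_psi (a := a) (b := b) hyI (2*j+1)
      have e : 2*j+1+3 = 2*(j+1)+2 := by ring
      rwa [e] at h
    rw [e1, e2]
    exact hcond j (by omega) (by omega)

lemma SS_zero_succ (m : ℕ) :
    SS 0 (m+1) = ⋃ p ∈ {p : ℕ × ℕ | p ≠ (0, 0)}, psi p.1 p.2 '' SS 0 m := by
  ext x
  constructor
  · rintro ⟨hxI, hxirr, hcond⟩
    obtain ⟨a, b, y, hyI, hyirr, hxy, _⟩ := decomp hxI hxirr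
    have hd1 : cfA x 1 = (a:ℤ) + 1 := by rw [hxy]; exact cfA_one_psi hyI
    have hd2 : cfA x 2 = (b:ℤ) + 1 := by rw [hxy]; exact cfA_two_psi hyI
    have hne : (a, b) ≠ ((0:ℕ), (0:ℕ)) := by
      intro h
      have h0 := hcond 0 (by omega) (by omega)
      apply h0
      simp only [Nat.mul_zero, Nat.zero_add, hd1, hd2]
      rw [Prod.mk.injEq] at h
      constructor <;> [rw [h.1]; rw [h.2]] <;> norm_num
    refine mem_iUnion₂.mpr ⟨(a, b), hne, y, ⟨hyI, hyirr, ?_⟩, hxy.symm⟩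
    intro i hNi him
    have e1 : cfA y (2*i+1) = cfA x (2*(i+1)+1) := by
      rw [hxy]
      have h := (cfA_shift_psi (a := a) (b := b) hyI (2*i)).symm
      have e : 2*i+3 = 2*(i+1)+1 := by ring
      rwa [e] at h
    have e2 : cfA y (2*i+2) = cfA x (2*(i+1)+2) := by
      rw [hxy]
      have h := (cfA_shift_psi (a := a) (b := b) hyI (2*i+1)).symm
      have e : 2*i+1+3 = 2*(i+1)+2 := by ring
      rwa [e] at h
    rw [e1, e2]
    exact hcond (i+1) (by omega) (by omega)
  · intro hx
    obtain ⟨⟨a, b⟩, hne, y, ⟨hyI, hyirr, hcond⟩, hxy⟩ := mem_iUnion₂.mp hx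
    subst hxy
    refine ⟨psi_mem hyI, psi_irrational hyI hyirr, ?_⟩
    intro i _ him
    cases i with
    | zero =>
      simp only [Nat.mul_zero, Nat.zero_add]
      rw [cfA_one_psi hyI, cfA_two_psi hyI]
      rintro ⟨h1, h2⟩
      apply hne
      have : a = 0 := by omega
      have : b = 0 := by omega
      simp_all
    | succ j =>
      have e1 : cfA (psi a b y) (2*(j+1)+1) = cfA y (2*j+1) := by
        have h := cfA_shift_psi (a := a) (b := b) hyI (2*j)
        have e : 2*j+3 = 2*(j+1)+1 := by ring
        rwa [e] at h
      have e2 : cfA (psi a b y) (2*(j+1)+2) = cfA y (2*j+2) := by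
        have h := cfA_shift_psi (a := a) (b := b) hyI (2*j+1)
        have e : 2*j+1+3 = 2*(j+1)+2 := by ring
        rwa [e] at h
      rw [e1, e2]
      exact hcond j (by omega) (by omega)

end AEDiv

namespace AEDiv
open MeasureTheory Set
open scoped ENNReal NNReal
variable {a b : ℕ} {x y u v : ℝ}

lemma psi_image_disjoint {T : Set ℝ} (hTsub : T ⊆ Ioo (0:ℝ) 1) {p q : ℕ × ℕ}
    (hpq : p ≠ q) : Disjoint (psi p.1 p.2 '' T) (psi q.1 q.2 '' T) := by
  rw [Set.disjoint_left]
  rintro x ⟨y, hy, rfl⟩ ⟨z, hz, hzx⟩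
  have hyI := hTsub hy
  have hzI := hTsub hz
  have h1 : cfA (psi p.1 p.2 y) 1 = (p.1 : ℤ) + 1 := cfA_one_psi hyI
  have h2 : cfA (psi p.1 p.2 y) 2 = (p.2 : ℤ) + 1 := cfA_two_psi hyI
  have h1' : cfA (psi q.1 q.2 z) 1 = (q.1 : ℤ) + 1 := cfA_one_psi hzI
  have h2' : cfA (psi q.1 q.2 z) 2 = (q.2 : ℤ) + 1 := cfA_two_psi hzI
  rw [hzx] at h1' h2'
  apply hpq
  have e1 : p.1 = q.1 := by omega
  have e2 : p.2 = q.2 := by omega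
  exact Prod.ext e1 e2

lemma psi_continuousOn : ContinuousOn (psi a b) (Ioo (0:ℝ) 1) := by
  apply ContinuousOn.div
  · fun_prop
  · unfold den; fun_prop
  · intro y hy; exact (den_pos hy.1.le).ne'

lemma psi_image_measurable {T : Set ℝ} (hT : MeasurableSet T) (hTsub : T ⊆ Ioo (0:ℝ) 1) :
    MeasurableSet (psi a b '' T) :=
  hT.image_of_continuousOn_injOn (psi_continuousOn.mono hTsub) (psi_injOn.mono hTsub)

lemma measurable_psi : Measurable (psi a b) :=
  (measurable_const.add measurable_id).div
    ((measurable_const.mul (measurable_const.add measurable_id)).add measurable_const)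

/-- one-dimensional change of variables for the lower Lebesgue integral -/
lemma lintegral_image_1d {s : Set ℝ} {f f' : ℝ → ℝ} (hs : MeasurableSet s)
    (hf' : ∀ x ∈ s, HasDerivWithinAt f (f' x) s x) (hf : InjOn f s) (g : ℝ → ℝ≥0∞) :
    ∫⁻ x in f '' s, g x = ∫⁻ x in s, ENNReal.ofReal |f' x| * g (f x) := by
  simpa only [ContinuousLinearMap.det_toSpanSingleton] using
    lintegral_image_eq_lintegral_abs_det_fderiv_mul volume hs
      (fun x hx => (hf' x hx).hasFDerivWithinAt) hf g

/-- change of variables along one inverse branch -/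
lemma cov {T : Set ℝ} (hT : MeasurableSet T) (hTsub : T ⊆ Ioo (0:ℝ) 1) (h : ℝ → ℝ≥0∞) :
    ∫⁻ x in psi a b '' T, h x
      = ∫⁻ y in T, ENNReal.ofReal (1/(den a b y)^2) * h (psi a b y) := by
  rw [lintegral_image_1d hT
    (fun y hy => ((psi_hasDeriv (hTsub hy).1.le).hasDerivWithinAt))
    (psi_injOn.mono hTsub) h]
  apply setLIntegral_congr_fun hT
  intro y hy
  beta_reduce
  rw [abs_of_pos]
  have := den_pos (a := a) (b := b) (hTsub hy).1.le
  positivity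

/-- the weighted transfer operator over a set `P` of admissible branches -/
noncomputable def Top (P : Set (ℕ × ℕ)) (h : ℝ → ℝ≥0∞) (y : ℝ) : ℝ≥0∞ :=
  ∑' p : P, ENNReal.ofReal (1/(den p.1.1 p.1.2 y)^2) * h (psi p.1.1 p.1.2 y)

lemma measurable_term (a b : ℕ) {h : ℝ → ℝ≥0∞} (hm : Measurable h) :
    Measurable fun y => ENNReal.ofReal (1/(den a b y)^2) * h (psi a b y) := by
  apply Measurable.mul
  · apply ENNReal.measurable_ofReal.comp
    apply measurable_const.div
    exact (((measurable_const.mul (measurable_const.add measurable_id)).add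
      measurable_const).pow_const 2)
  · exact hm.comp measurable_psi

lemma measurable_Top (P : Set (ℕ × ℕ)) {h : ℝ → ℝ≥0∞} (hm : Measurable h) :
    Measurable (Top P h) := by
  apply Measurable.ennreal_tsum
  intro p
  exact measurable_term _ _ hm

lemma transfer (P : Set (ℕ × ℕ)) {T : Set ℝ} (hT : MeasurableSet T)
    (hTsub : T ⊆ Ioo (0:ℝ) 1) {h : ℝ → ℝ≥0∞} (hm : Measurable h) :
    ∫⁻ x in ⋃ p ∈ P, psi p.1 p.2 '' T, h x = ∫⁻ y in T, Top P h y := by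
  rw [lintegral_biUnion₀ (Set.to_countable P)
    (fun p _ => (psi_image_measurable hT hTsub).nullMeasurableSet)
    (fun p hp q hq hpq => Disjoint.aedisjoint (psi_image_disjoint hTsub hpq))]
  have : ∀ p : P, ∫⁻ x in psi (p:ℕ×ℕ).1 (p:ℕ×ℕ).2 '' T, h x
      = ∫⁻ y in T, ENNReal.ofReal (1/(den (p:ℕ×ℕ).1 (p:ℕ×ℕ).2 y)^2)
          * h (psi (p:ℕ×ℕ).1 (p:ℕ×ℕ).2 y) := fun p => cov hT hTsub h
  rw [tsum_congr this]
  rw [← lintegral_tsum (fun p => (measurable_term _ _ hm).aemeasurable)]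
  rfl

end AEDiv

namespace AEDiv
open MeasureTheory Set Real
open scoped ENNReal NNReal
variable {a b : ℕ} {x y u v : ℝ} {h : ℝ → ℝ≥0∞}

/-- log-Lipschitz cone of densities -/
def Cone (h : ℝ → ℝ≥0∞) : Prop :=
  ∀ u ∈ Ioo (0:ℝ) 1, ∀ v ∈ Ioo (0:ℝ) 1,
    h u ≤ ENNReal.ofReal (Real.exp (3*|u-v|)) * h v

lemma cone_const (c : ℝ≥0∞) : Cone (fun _ => c) := by
  intro u hu v hv
  have h1 : (1:ℝ≥0∞) ≤ ENNReal.ofReal (Real.exp (3*|u-v|)) := by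
    rw [← ENNReal.ofReal_one]
    apply ENNReal.ofReal_le_ofReal
    rw [← Real.exp_zero]
    apply Real.exp_le_exp.mpr
    positivity
  calc c = 1 * c := (one_mul c).symm
  _ ≤ ENNReal.ofReal (Real.exp (3*|u-v|)) * c := mul_le_mul_left h1 c

lemma weight_ratio (hu : 0 ≤ u) (hv : 0 ≤ v) :
    1/(den a b u)^2 ≤ Real.exp (2*|u-v|) * (1/(den a b v)^2) := by
  have e1 := den_ratio (a := a) (b := b) hu hv
  have e2 : 1 + |u-v| ≤ Real.exp |u-v| := by
    have := Real.add_one_le_exp |u-v|; linarith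
  have h1 := den_ge_two (a := a) (b := b) hu
  have h2 := den_ge_two (a := a) (b := b) hv
  have hd : (0:ℝ) ≤ |u-v| := abs_nonneg _
  have hexp : Real.exp (2*|u-v|) = Real.exp |u-v| * Real.exp |u-v| := by
    rw [← Real.exp_add]; ring_nf
  have hform : Real.exp (2*|u-v|) * (1/(den a b v)^2)
      = (Real.exp |u-v| * Real.exp |u-v|)/(den a b v)^2 := by rw [hexp]; ring
  rw [hform, div_le_div_iff₀ (by positivity) (by positivity)]
  have e3 : (den a b v)^2 ≤ ((1+|u-v|) * den a b u)^2 :=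
    pow_le_pow_left₀ (by linarith) e1 2
  have e4 : ((1+|u-v|) * den a b u)^2 ≤ (Real.exp |u-v| * den a b u)^2 := by
    apply pow_le_pow_left₀ (by positivity)
    apply mul_le_mul_of_nonneg_right e2 (by linarith)
  have e5 : (Real.exp |u-v| * den a b u)^2 = Real.exp |u-v| * Real.exp |u-v| * (den a b u)^2 := by
    ring
  linarith

lemma cone_Top (P : Set (ℕ × ℕ)) (hc : Cone h) : Cone (Top P h) := by
  intro u hu v hv
  rw [Top, Top, ← ENNReal.tsum_mul_left]
  apply ENNReal.tsum_le_tsum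
  rintro ⟨⟨a, b⟩, hp⟩
  simp only
  set d := |u - v| with hd
  have hd0 : 0 ≤ d := abs_nonneg _
  have hpsiuv : |psi a b u - psi a b v| ≤ d/4 := psi_contract hu.1.le hv.1.le
  have h1 : ENNReal.ofReal (1/(den a b u)^2)
      ≤ ENNReal.ofReal (Real.exp (2*d)) * ENNReal.ofReal (1/(den a b v)^2) := by
    rw [← ENNReal.ofReal_mul (by positivity)]
    exact ENNReal.ofReal_le_ofReal (weight_ratio hu.1.le hv.1.le)
  have h2 : h (psi a b u) ≤ ENNReal.ofReal (Real.exp (3*(d/4))) * h (psi a b v) := by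
    calc h (psi a b u)
        ≤ ENNReal.ofReal (Real.exp (3*|psi a b u - psi a b v|)) * h (psi a b v) :=
          hc _ (psi_mem hu) _ (psi_mem hv)
      _ ≤ ENNReal.ofReal (Real.exp (3*(d/4))) * h (psi a b v) := by
          apply mul_le_mul_left
          apply ENNReal.ofReal_le_ofReal
          apply Real.exp_le_exp.mpr
          linarith
  calc ENNReal.ofReal (1/(den a b u)^2) * h (psi a b u)
      ≤ (ENNReal.ofReal (Real.exp (2*d)) * ENNReal.ofReal (1/(den a b v)^2))
        * (ENNReal.ofReal (Real.exp (3*(d/4))) * h (psi a b v)) := mul_le_mul' h1 h2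
    _ = (ENNReal.ofReal (Real.exp (2*d)) * ENNReal.ofReal (Real.exp (3*(d/4))))
        * (ENNReal.ofReal (1/(den a b v)^2) * h (psi a b v)) := by ring
    _ ≤ ENNReal.ofReal (Real.exp (3*d))
        * (ENNReal.ofReal (1/(den a b v)^2) * h (psi a b v)) := by
        apply mul_le_mul_left
        rw [← ENNReal.ofReal_mul (by positivity), ← Real.exp_add]
        apply ENNReal.ofReal_le_ofReal
        apply Real.exp_le_exp.mpr
        linarith

lemma Top_int_le (P : Set (ℕ × ℕ)) (hm : Measurable h) :
    ∫⁻ y in Ioo (0:ℝ) 1, Top P h y ≤ ∫⁻ x in Ioo (0:ℝ) 1, h x := by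
  rw [← transfer P measurableSet_Ioo (subset_refl _) hm]
  apply lintegral_mono_set
  apply iUnion₂_subset
  intro p _
  rintro x ⟨y, hy, rfl⟩
  exact psi_mem hy

lemma psi_avoid (hp : ¬(a = 0 ∧ b = 0)) (hy : y ∈ Ioo (0:ℝ) 1) :
    psi a b y ∉ Ioo (1/2:ℝ) (2/3) := by
  have hden := den_pos (a := a) (b := b) hy.1.le
  have hy0 := hy.1
  have hy1 := hy.2
  have hb0 : (0:ℝ) ≤ (b:ℝ) := Nat.cast_nonneg b
  have ha0 : (0:ℝ) ≤ (a:ℝ) := Nat.cast_nonneg a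
  rcases Nat.eq_zero_or_pos a with ha | ha
  · have hb : 1 ≤ b := by omega
    have hb1 : (1:ℝ) ≤ (b:ℝ) := by exact_mod_cast hb
    intro hmem
    have : (2:ℝ)/3 ≤ psi a b y := by
      rw [psi, le_div_iff₀ hden, den]
      subst ha
      push_cast
      nlinarith
    linarith [hmem.2]
  · have ha1 : (1:ℝ) ≤ (a:ℝ) := by exact_mod_cast ha
    intro hmem
    have : psi a b y ≤ 1/2 := by
      rw [psi, div_le_iff₀ hden, den]
      nlinarith
    linarith [hmem.1]

lemma arith_step {A B C : ℝ≥0∞} (hsum : A + B = C)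
    (hB : ENNReal.ofReal (1/126) * C ≤ B) :
    A ≤ ENNReal.ofReal (125/126) * C := by
  by_cases hC : C = ⊤
  · rw [hC, ENNReal.mul_top (by rw [Ne, ENNReal.ofReal_eq_zero]; norm_num)]
    exact le_top
  · have hAt : A ≠ ⊤ := fun h => hC (by rw [← hsum, h]; simp)
    have hBt : B ≠ ⊤ := fun h => hC (by rw [← hsum, h]; simp)
    have h1 : A.toReal + B.toReal = C.toReal := by
      rw [← ENNReal.toReal_add hAt hBt, hsum]
    have h2 : (1/126) * C.toReal ≤ B.toReal := by
      have := ENNReal.toReal_mono hBt hB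
      rwa [ENNReal.toReal_mul, ENNReal.toReal_ofReal (by norm_num)] at this
    have h3 : A.toReal ≤ (125/126) * C.toReal := by linarith
    have hX : ENNReal.ofReal (125/126) * C ≠ ⊤ := ENNReal.mul_ne_top ENNReal.ofReal_ne_top hC
    rw [← ENNReal.toReal_le_toReal hAt hX]
    rwa [ENNReal.toReal_mul, ENNReal.toReal_ofReal (by norm_num)]

lemma cone_bound (hc : Cone h) (hv : v ∈ Ioo (0:ℝ) 1) :
    ∫⁻ x in Ioo (0:ℝ) 1, h x ≤ ENNReal.ofReal 21 * h v := by
  have hstep : ∀ u ∈ Ioo (0:ℝ) 1, h u ≤ ENNReal.ofReal 21 * h v := by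
    intro u hu
    refine (hc u hu v hv).trans (mul_le_mul_left ?_ _)
    apply ENNReal.ofReal_le_ofReal
    have hd : |u - v| ≤ 1 := by
      rw [abs_le]; constructor <;> [linarith [hu.1, hv.2]; linarith [hu.2, hv.1]]
    have : Real.exp (3*|u-v|) ≤ Real.exp 3 := Real.exp_le_exp.mpr (by linarith)
    refine this.trans ?_
    have h1 : Real.exp 1 < 2.7182818286 := Real.exp_one_lt_d9
    have h3 : Real.exp 3 = Real.exp 1 * Real.exp 1 * Real.exp 1 := by
      rw [← Real.exp_add, ← Real.exp_add]; norm_num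
    have he0 : 0 < Real.exp 1 := Real.exp_pos 1
    rw [h3]; nlinarith
  calc ∫⁻ x in Ioo (0:ℝ) 1, h x
      ≤ ∫⁻ _x in Ioo (0:ℝ) 1, (ENNReal.ofReal 21 * h v) :=
        setLIntegral_mono' measurableSet_Ioo hstep
    _ = ENNReal.ofReal 21 * h v := by
        rw [setLIntegral_const, Real.volume_Ioo]
        norm_num

lemma Top_int_le' (P : Set (ℕ × ℕ)) (hP : ((0:ℕ), (0:ℕ)) ∉ P) (hm : Measurable h)
    (hc : Cone h) :
    ∫⁻ y in Ioo (0:ℝ) 1, Top P h y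
      ≤ ENNReal.ofReal (125/126) * ∫⁻ x in Ioo (0:ℝ) 1, h x := by
  set J : Set ℝ := Ioo (1/2:ℝ) (2/3)
  have hJI : J ⊆ Ioo (0:ℝ) 1 := by
    intro z hz; exact ⟨by linarith [hz.1], by linarith [hz.2]⟩
  have hsub : (⋃ p ∈ P, psi p.1 p.2 '' Ioo (0:ℝ) 1) ⊆ Ioo (0:ℝ) 1 \ J := by
    apply iUnion₂_subset
    rintro ⟨a, b⟩ hp x ⟨y, hy, rfl⟩
    refine ⟨psi_mem hy, psi_avoid ?_ hy⟩
    rintro ⟨rfl, rfl⟩; exact hP hp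
  have step1 : ∫⁻ y in Ioo (0:ℝ) 1, Top P h y ≤ ∫⁻ x in Ioo (0:ℝ) 1 \ J, h x := by
    rw [← transfer P measurableSet_Ioo (subset_refl _) hm]
    exact lintegral_mono_set hsub
  refine step1.trans ?_
  have hsplit : (∫⁻ x in Ioo (0:ℝ) 1 \ J, h x) + (∫⁻ x in J, h x)
      = ∫⁻ x in Ioo (0:ℝ) 1, h x := by
    rw [← lintegral_union measurableSet_Ioo disjoint_sdiff_left, diff_union_of_subset hJI]
  have hJbound : ENNReal.ofReal (1/126) * (∫⁻ x in Ioo (0:ℝ) 1, h x) ≤ ∫⁻ x in J, h x := by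
    have hall : ∀ z ∈ J, ENNReal.ofReal (1/21) * (∫⁻ x in Ioo (0:ℝ) 1, h x) ≤ h z := by
      intro z hz
      have := cone_bound hc (hJI hz)
      calc ENNReal.ofReal (1/21) * (∫⁻ x in Ioo (0:ℝ) 1, h x)
          ≤ ENNReal.ofReal (1/21) * (ENNReal.ofReal 21 * h z) := mul_le_mul_right this _
        _ = (ENNReal.ofReal (1/21) * ENNReal.ofReal 21) * h z := by ring
        _ = h z := by
            rw [← ENNReal.ofReal_mul (by norm_num)]
            norm_num
    calc ENNReal.ofReal (1/126) * (∫⁻ x in Ioo (0:ℝ) 1, h x)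
        = ENNReal.ofReal (1/6) * (ENNReal.ofReal (1/21) * (∫⁻ x in Ioo (0:ℝ) 1, h x)) := by
          rw [← mul_assoc, ← ENNReal.ofReal_mul (by norm_num)]
          norm_num
      _ = ∫⁻ _z in J, (ENNReal.ofReal (1/21) * (∫⁻ x in Ioo (0:ℝ) 1, h x)) := by
          rw [setLIntegral_const]
          have : volume J = ENNReal.ofReal (1/6) := by
            rw [Real.volume_Ioo]; norm_num
          rw [this, mul_comm]
      _ ≤ ∫⁻ z in J, h z := setLIntegral_mono' measurableSet_Ioo hall
  exact arith_step hsplit hJbound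

end AEDiv

namespace AEDiv
open MeasureTheory Set Filter
open scoped ENNReal NNReal Topology
variable {h : ℝ → ℝ≥0∞}

lemma key0 : ∀ m : ℕ, ∀ {h : ℝ → ℝ≥0∞}, Measurable h → Cone h →
    ∫⁻ x in SS 0 m, h x ≤ (ENNReal.ofReal (125/126))^m * ∫⁻ x in Ioo (0:ℝ) 1, h x := by
  intro m
  induction m with
  | zero =>
    intro h hm hc
    rw [pow_zero, one_mul]
    exact lintegral_mono_set (SS_subset 0 0)
  | succ m ih =>
    intro h hm hc
    rw [SS_zero_succ m, transfer {p : ℕ × ℕ | p ≠ (0, 0)} (measurable_SS 0 m) (SS_subset 0 m) hm]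
    calc ∫⁻ y in SS 0 m, Top {p : ℕ × ℕ | p ≠ (0, 0)} h y
        ≤ (ENNReal.ofReal (125/126))^m
            * ∫⁻ y in Ioo (0:ℝ) 1, Top {p : ℕ × ℕ | p ≠ (0, 0)} h y :=
          ih (measurable_Top _ hm) (cone_Top _ hc)
      _ ≤ (ENNReal.ofReal (125/126))^m
            * (ENNReal.ofReal (125/126) * ∫⁻ x in Ioo (0:ℝ) 1, h x) := by
          apply mul_le_mul_right
          exact Top_int_le' _ (by simp) hm hc
      _ = (ENNReal.ofReal (125/126))^(m+1) * ∫⁻ x in Ioo (0:ℝ) 1, h x := by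
          rw [pow_succ]; ring

lemma keyN (N : ℕ) : ∀ m : ℕ, ∀ {h : ℝ → ℝ≥0∞}, Measurable h → Cone h →
    ∫⁻ x in SS N m, h x ≤ (ENNReal.ofReal (125/126))^m * ∫⁻ x in Ioo (0:ℝ) 1, h x := by
  induction N with
  | zero => exact fun m _ hm hc => key0 m hm hc
  | succ N ih =>
    intro m h hm hc
    have hU : SS (N+1) m = ⋃ p ∈ (univ : Set (ℕ × ℕ)), psi p.1 p.2 '' SS N m := by
      rw [SS_succ_left]; simp
    rw [hU, transfer univ (measurable_SS N m) (SS_subset N m) hm]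
    calc ∫⁻ y in SS N m, Top univ h y
        ≤ (ENNReal.ofReal (125/126))^m * ∫⁻ y in Ioo (0:ℝ) 1, Top univ h y :=
          ih m (measurable_Top _ hm) (cone_Top _ hc)
      _ ≤ (ENNReal.ofReal (125/126))^m * ∫⁻ x in Ioo (0:ℝ) 1, h x :=
          mul_le_mul_right (Top_int_le _ hm) _

lemma vol_SS (N m : ℕ) : volume (SS N m) ≤ (ENNReal.ofReal (125/126))^m := by
  have := keyN N m (h := fun _ => 1) measurable_const (cone_const 1)
  rw [setLIntegral_one, setLIntegral_one, Real.volume_Ioo] at this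
  simpa using this

lemma vol_iInter_SS (N : ℕ) : volume (⋂ m, SS N m) = 0 := by
  have hle : ∀ m : ℕ, volume (⋂ m, SS N m) ≤ (ENNReal.ofReal (125/126))^m := by
    intro m
    exact (measure_mono (iInter_subset _ m)).trans (vol_SS N m)
  have hget : Tendsto (fun m : ℕ => (ENNReal.ofReal (125/126))^m) atTop (𝓝 0) := by
    apply ENNReal.tendsto_pow_atTop_nhds_zero_of_lt_one
    rw [← ENNReal.ofReal_one]
    exact ENNReal.ofReal_lt_ofReal_iff_of_nonneg (by norm_num) |>.mpr (by norm_num)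
  have := ge_of_tendsto' hget hle
  exact le_antisymm this zero_le

end AEDiv

open MeasureTheory Set Filter AEDiv
open scoped ENNReal Topology

/-- For Lebesgue-a.e. `α ∈ (0,1)`, the series `∑_{k=2}^∞ 1/(a_k a_{k-1})` diverges. -/
theorem ae_divergent :
    ∀ᵐ α ∂(MeasureTheory.volume.restrict (Set.Ioo (0 : ℝ) 1)),
      ¬ Summable (fun k : ℕ =>
        1 / ((cfA α (k + 2) : ℝ) * (cfA α (k + 1) : ℝ))) := by
  set Z : Set ℝ := {x | ¬ Irrational x} ∪ ⋃ N : ℕ, ⋂ m : ℕ, SS N m with hZdef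
  have hZ : volume Z = 0 := by
    apply measure_union_null
    · have : {x : ℝ | ¬ Irrational x} = Set.range ((↑) : ℚ → ℝ) := by
        ext x; simp [Irrational]
      rw [this]
      exact (Set.countable_range _).measure_zero _
    · exact measure_iUnion_null fun N => vol_iInter_SS N
  have h1 : ∀ᵐ x ∂(volume.restrict (Set.Ioo (0:ℝ) 1)), x ∉ Z :=
    ae_restrict_of_ae (measure_eq_zero_iff_ae_notMem.mp hZ)
  have h2 : ∀ᵐ x ∂(volume.restrict (Set.Ioo (0:ℝ) 1)), x ∈ Set.Ioo (0:ℝ) 1 :=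
    ae_restrict_mem measurableSet_Ioo
  filter_upwards [h1, h2] with x hxZ hxI
  intro hsum
  have hirr : Irrational x := by
    by_contra hcon
    exact hxZ (Or.inl hcon)
  -- from summability, the terms tend to zero
  have htend := hsum.tendsto_atTop_zero
  rw [Metric.tendsto_atTop] at htend
  obtain ⟨K, hK⟩ := htend (1/2) (by norm_num)
  -- but there is a pattern (1,1) at some position i ≥ K
  have hnot : x ∉ ⋂ m : ℕ, SS K m := fun hmem => hxZ (Or.inr (mem_iUnion.mpr ⟨K, hmem⟩))
  rw [mem_iInter] at hnot
  push_neg at hnot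
  obtain ⟨m, hm⟩ := hnot
  have : ∃ i, K ≤ i ∧ i < K + m ∧ cfA x (2*i+1) = 1 ∧ cfA x (2*i+2) = 1 := by
    by_contra hcon
    push_neg at hcon
    exact hm ⟨hxI, hirr, fun i hi1 hi2 hpat =>
      (hcon i hi1 hi2) hpat.1 hpat.2⟩
  obtain ⟨i, hKi, _, hpat1, hpat2⟩ := this
  have hterm := hK (2*i) (by omega)
  have : (1 : ℝ) / ((cfA x (2*i + 2) : ℝ) * (cfA x (2*i + 1) : ℝ)) = 1 := by
    rw [hpat1, hpat2]; norm_num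
  rw [Real.dist_eq, this] at hterm
  norm_num at hterm
end

section
/- Let (z_k)_{k≥1} be integers with |z_k| < a_k for all k, and suppose z_ℓ ≠ 0 where ℓ is the least index with z_ℓ ≠ 0. Then the series ∑_{k=ℓ}^∞ z_k ζ_k converges absolutely and |∑_{k=ℓ}^∞ z_k ζ_k| ≥ ζ_ℓ − ∑_{k=ℓ+1}^∞ (a_k − 1) ζ_k > 0, where ζ_j = |q_j α − p_j|. -/
open scoped BigOperators

/-- Gauss map iterates. -/
noncomputable def cfX (α : ℝ) (k : ℕ) : ℝ := gaussMap^[k] (Int.fract α)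

lemma cfX_succ (α : ℝ) (k : ℕ) : cfX α (k + 1) = Int.fract (1 / cfX α k) := by
  simp [cfX, Function.iterate_succ_apply', gaussMap]

lemma cfX_props (α : ℝ) (hα : Irrational α) :
    ∀ k, Irrational (cfX α k) ∧ 0 < cfX α k ∧ cfX α k < 1 := by
  intro k
  induction k with
  | zero =>
    have h1 : Irrational (Int.fract α) := by
      rw [← Int.self_sub_floor]; exact hα.sub_intCast ⌊α⌋
    refine ⟨h1, ?_, Int.fract_lt_one α⟩
    rcases lt_or_eq_of_le (Int.fract_nonneg α) with h | h
    · exact h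
    · exact absurd (by simpa using h.symm) (by simpa using h1.ne_int 0)
  | succ k ih =>
    obtain ⟨hirr, hpos, hlt⟩ := ih
    have h1 : Irrational (1 / cfX α k) := by
      simpa [one_div] using hirr.inv
    have h2 : Irrational (cfX α (k + 1)) := by
      rw [cfX_succ, ← Int.self_sub_floor]; exact h1.sub_intCast _
    have h0 : (0:ℝ) ≤ cfX α (k + 1) := by rw [cfX_succ]; exact Int.fract_nonneg _
    refine ⟨h2, ?_, ?_⟩
    · rcases lt_or_eq_of_le h0 with h | h
      · exact h
      · exact absurd (by simpa using h.symm) (by simpa using h2.ne_int 0)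
    · rw [cfX_succ]; exact Int.fract_lt_one _

lemma cfA_eq (α : ℝ) (k : ℕ) : cfA α (k + 1) = ⌊1 / cfX α k⌋ := rfl

lemma cfA_pos (α : ℝ) (hα : Irrational α) (k : ℕ) : 1 ≤ cfA α (k + 1) := by
  obtain ⟨_, hpos, hlt⟩ := cfX_props α hα k
  rw [cfA_eq]
  exact Int.le_floor.mpr (by push_cast; exact one_le_one_div hpos hlt.le)

/-- signed version of ζ -/
noncomputable def cfT (α : ℝ) (k : ℕ) : ℝ :=
  (-1) ^ (k + 1) * ((cfQ α k : ℝ) * α - (cfP α k : ℝ))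

lemma cfT_zero (α : ℝ) : cfT α 0 = 1 := by simp [cfT, cfQ, cfP]

lemma cfT_rec (α : ℝ) (k : ℕ) :
    cfT α (k + 2) = cfT α k - (cfA α (k + 1) : ℝ) * cfT α (k + 1) := by
  simp only [cfT, cfP, cfQ]
  push_cast
  ring

lemma cfT_succ (α : ℝ) (hα : Irrational α) :
    ∀ k, cfT α (k + 1) = cfX α k * cfT α k := by
  intro k
  induction k with
  | zero =>
    show cfT α 1 = cfX α 0 * cfT α 0
    rw [cfT_zero, mul_one]
    show (-1:ℝ) ^ 2 * ((cfQ α 1 : ℝ) * α - (cfP α 1 : ℝ)) = Int.fract α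
    rw [← Int.self_sub_floor]
    simp only [cfQ, cfP, cfA]
    push_cast
    ring
  | succ k ih =>
    have hx := (cfX_props α hα k).2.1
    rw [cfT_rec, ih, cfX_succ, cfA_eq, Int.fract]
    field_simp

lemma cfT_pos (α : ℝ) (hα : Irrational α) : ∀ k, 0 < cfT α k := by
  intro k
  induction k with
  | zero => rw [cfT_zero]; norm_num
  | succ k ih =>
    rw [cfT_succ α hα]
    exact mul_pos (cfX_props α hα k).2.1 ih

lemma cfZeta_eq (α : ℝ) (hα : Irrational α) (k : ℕ) : cfZeta α k = cfT α k := by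
  have h := cfT_pos α hα k
  have : |cfT α k| = cfT α k := abs_of_pos h
  rw [← this, cfT, abs_mul, abs_pow, abs_neg, abs_one, one_pow, one_mul, cfZeta]

lemma cfZeta_pos (α : ℝ) (hα : Irrational α) (k : ℕ) : 0 < cfZeta α k := by
  rw [cfZeta_eq α hα]; exact cfT_pos α hα k

lemma cfZeta_succ (α : ℝ) (hα : Irrational α) (k : ℕ) :
    cfZeta α (k + 1) = cfX α k * cfZeta α k := by
  rw [cfZeta_eq α hα, cfZeta_eq α hα, cfT_succ α hα]

lemma cfZeta_rec (α : ℝ) (hα : Irrational α) (k : ℕ) :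
    cfZeta α k = (cfA α (k + 1) : ℝ) * cfZeta α (k + 1) + cfZeta α (k + 2) := by
  rw [cfZeta_eq α hα, cfZeta_eq α hα, cfZeta_eq α hα, cfT_rec]
  ring

lemma cfZeta_lt (α : ℝ) (hα : Irrational α) (k : ℕ) :
    cfZeta α (k + 1) < cfZeta α k := by
  rw [cfZeta_succ α hα]
  have := (cfX_props α hα k).2.2
  nlinarith [cfZeta_pos α hα k, (cfX_props α hα k).2.1]

lemma cfZeta_half (α : ℝ) (hα : Irrational α) (k : ℕ) :
    cfZeta α (k + 2) ≤ cfZeta α k / 2 := by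
  obtain ⟨_, hpos, hlt⟩ := cfX_props α hα k
  obtain ⟨_, hpos', hlt'⟩ := cfX_props α hα (k + 1)
  have hz := cfZeta_pos α hα k
  rw [cfZeta_succ α hα, cfZeta_succ α hα]
  rcases le_or_gt (cfX α k) (1/2) with h | h
  · nlinarith [mul_pos hpos hz, mul_le_mul_of_nonneg_right hlt'.le (mul_nonneg hpos.le hz.le)]
  · have hx1 : cfX α (k + 1) = 1 / cfX α k - 1 := by
      rw [cfX_succ, Int.fract]
      have : ⌊1 / cfX α k⌋ = 1 := by
        apply Int.floor_eq_iff.mpr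
        refine ⟨by push_cast; exact one_le_one_div hpos hlt.le, ?_⟩
        push_cast
        rw [div_lt_iff₀ hpos]; linarith
      rw [this]; push_cast; ring
    have : cfX α (k + 1) * cfX α k = 1 - cfX α k := by
      rw [hx1]; field_simp
    nlinarith

lemma cfZeta_bound (α : ℝ) (hα : Irrational α) :
    ∀ k, cfZeta α k ≤ Real.sqrt 2 * ((Real.sqrt 2)⁻¹) ^ k := by
  have hs2 : (1:ℝ) < Real.sqrt 2 := by
    rw [show (1:ℝ) = Real.sqrt 1 by simp]
    exact Real.sqrt_lt_sqrt (by norm_num) (by norm_num)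
  have hsq : Real.sqrt 2 * Real.sqrt 2 = 2 := Real.mul_self_sqrt (by norm_num)
  intro k
  induction k using Nat.strong_induction_on with
  | _ k ih =>
    match k with
    | 0 =>
      simpa [cfZeta, cfQ, cfP] using hs2.le
    | 1 =>
      have h1 : cfZeta α 1 < 1 := by
        have := cfZeta_lt α hα 0
        simpa [cfZeta, cfQ, cfP] using this
      have : Real.sqrt 2 * (Real.sqrt 2)⁻¹ ^ 1 = 1 := by
        field_simp
      rw [this]; exact h1.le
    | (k + 2) =>
      have h1 := cfZeta_half α hα k
      have h2 := ih k (by omega)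
      have hinv : (Real.sqrt 2)⁻¹ * (Real.sqrt 2)⁻¹ = 1 / 2 := by
        rw [← mul_inv, hsq]; norm_num
      have h3 : Real.sqrt 2 * (Real.sqrt 2)⁻¹ ^ (k + 2)
          = (Real.sqrt 2 * (Real.sqrt 2)⁻¹ ^ k) / 2 := by
        rw [pow_succ, pow_succ, mul_assoc ((Real.sqrt 2)⁻¹ ^ k), hinv]
        ring
      rw [h3]
      linarith

lemma cfZeta_summable (α : ℝ) (hα : Irrational α) : Summable (cfZeta α) := by
  have hs2 : (1:ℝ) < Real.sqrt 2 := by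
    rw [show (1:ℝ) = Real.sqrt 1 by simp]
    exact Real.sqrt_lt_sqrt (by norm_num) (by norm_num)
  have hr : (Real.sqrt 2)⁻¹ < 1 := by
    rw [inv_lt_one_iff₀]; right; exact hs2
  have hr0 : (0:ℝ) ≤ (Real.sqrt 2)⁻¹ := by positivity
  have hgeo : Summable (fun k : ℕ => Real.sqrt 2 * ((Real.sqrt 2)⁻¹) ^ k) :=
    (summable_geometric_of_lt_one hr0 hr).mul_left _
  exact Summable.of_nonneg_of_le (fun k => (cfZeta_pos α hα k).le)
    (cfZeta_bound α hα) hgeo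

/-- If the integers `z k` (for `k ≥ 1`) satisfy `|z k| < a k`, and `ℓ` is the
least index with `z ℓ ≠ 0`, then `∑_{k=ℓ}^∞ z k ζ k` converges absolutely and
`|∑_{k=ℓ}^∞ z k ζ k| ≥ ζ ℓ - ∑_{k=ℓ+1}^∞ (a k - 1) ζ k > 0`. -/
theorem lower_bound (α : ℝ) (hα : Irrational α) (z : ℕ → ℤ)
    (hz : ∀ k, 1 ≤ k → |z k| < cfA α k)
    (l : ℕ) (hl : 1 ≤ l) (hzl : z l ≠ 0) (hmin : ∀ k, 1 ≤ k → k < l → z k = 0) :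
    Summable (fun i : ℕ => |(z (l + i) : ℝ) * cfZeta α (l + i)|) ∧
    Summable (fun i : ℕ => ((cfA α (l + 1 + i) : ℝ) - 1) * cfZeta α (l + 1 + i)) ∧
    |∑' i : ℕ, (z (l + i) : ℝ) * cfZeta α (l + i)|
      ≥ cfZeta α l - ∑' i : ℕ, ((cfA α (l + 1 + i) : ℝ) - 1) * cfZeta α (l + 1 + i) ∧
    0 < cfZeta α l - ∑' i : ℕ, ((cfA α (l + 1 + i) : ℝ) - 1) * cfZeta α (l + 1 + i) := by
  have hζpos := cfZeta_pos α hα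
  have hζsum := cfZeta_summable α hα
  have hsum_shift : ∀ m : ℕ, Summable (fun i : ℕ => cfZeta α (m + i)) := by
    intro m
    have := (summable_nat_add_iff m).mpr hζsum
    simpa [add_comm] using this
  have key : ∀ k, (cfA α (k + 1) : ℝ) * cfZeta α (k + 1) ≤ cfZeta α k := by
    intro k
    have h1 := cfZeta_rec α hα k
    have h2 := hζpos (k + 2)
    linarith
  have haux : ∀ k, 1 ≤ k → ((cfA α k : ℝ) - 1) * cfZeta α k ≤ cfZeta α (k - 1) := by
    intro k hk
    obtain ⟨m, rfl⟩ : ∃ m, k = m + 1 := ⟨k - 1, by omega⟩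
    have h1 := key m
    have h2 := hζpos (m + 1)
    simpa using (by nlinarith : ((cfA α (m + 1) : ℝ) - 1) * cfZeta α (m + 1) ≤ cfZeta α m)
  have hzle : ∀ k, 1 ≤ k → |(z k : ℝ)| ≤ (cfA α k : ℝ) - 1 := by
    intro k hk
    have := hz k hk
    have : |z k| ≤ cfA α k - 1 := by omega
    calc |(z k : ℝ)| = ((|z k| : ℤ) : ℝ) := by push_cast; rfl
      _ ≤ ((cfA α k - 1 : ℤ) : ℝ) := by exact_mod_cast this
      _ = (cfA α k : ℝ) - 1 := by push_cast; ring
  -- Summability 1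
  have S1 : Summable (fun i : ℕ => |(z (l + i) : ℝ) * cfZeta α (l + i)|) := by
    apply Summable.of_nonneg_of_le (fun i => abs_nonneg _) _ (hsum_shift (l - 1))
    intro i
    have hk1 : 1 ≤ l + i := by omega
    have h1 := hzle (l + i) hk1
    have h2 := haux (l + i) hk1
    have h3 : l + i - 1 = l - 1 + i := by omega
    have h4 := hζpos (l + i)
    rw [abs_mul, abs_of_pos h4, ← h3]
    nlinarith
  -- Summability 2
  have S2nn : ∀ i : ℕ, 0 ≤ ((cfA α (l + 1 + i) : ℝ) - 1) * cfZeta α (l + 1 + i) := by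
    intro i
    have ha : 1 ≤ cfA α (l + i + 1) := cfA_pos α hα (l + i)
    have h3 : l + 1 + i = l + i + 1 := by omega
    rw [h3]
    have : (1:ℝ) ≤ (cfA α (l + i + 1) : ℝ) := by exact_mod_cast ha
    have := (hζpos (l + i + 1)).le
    nlinarith
  have S2 : Summable (fun i : ℕ => ((cfA α (l + 1 + i) : ℝ) - 1) * cfZeta α (l + 1 + i)) := by
    apply Summable.of_nonneg_of_le S2nn _ (hsum_shift l)
    intro i
    have h2 := haux (l + 1 + i) (by omega)
    have h3 : l + 1 + i - 1 = l + i := by omega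
    rwa [h3] at h2
  -- the A-identity
  have partial_sum : ∀ N : ℕ, ∑ i ∈ Finset.range N, (cfA α (l + 1 + i) : ℝ) * cfZeta α (l + 1 + i)
      = cfZeta α l + cfZeta α (l + 1) - cfZeta α (l + N) - cfZeta α (l + N + 1) := by
    intro N
    induction N with
    | zero => simp
    | succ N ih =>
      rw [Finset.sum_range_succ, ih]
      have h1 := cfZeta_rec α hα (l + N)
      have h3 : l + 1 + N = l + N + 1 := by omega
      rw [h3]
      have h4 : l + (N + 1) = l + N + 1 := by omega
      rw [h4]
      have h5 : l + N + 1 + 1 = l + N + 2 := by omega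
      rw [h5]
      linarith
  have hAnn : ∀ i : ℕ, 0 ≤ (cfA α (l + 1 + i) : ℝ) * cfZeta α (l + 1 + i) := by
    intro i
    have := S2nn i
    have := (hζpos (l + 1 + i)).le
    nlinarith
  have htend : ∀ c : ℕ, Filter.Tendsto (fun N : ℕ => cfZeta α (c + N)) Filter.atTop (nhds 0) := by
    intro c
    have h0 := hζsum.tendsto_atTop_zero
    have := h0.comp (Filter.tendsto_add_atTop_nat c)
    simpa [Function.comp_def, add_comm] using this
  have hAsum : HasSum (fun i : ℕ => (cfA α (l + 1 + i) : ℝ) * cfZeta α (l + 1 + i))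
      (cfZeta α l + cfZeta α (l + 1)) := by
    rw [hasSum_iff_tendsto_nat_of_nonneg hAnn]
    have h1 := htend l
    have h2 : Filter.Tendsto (fun N : ℕ => cfZeta α (l + N + 1)) Filter.atTop (nhds 0) := by
      have := htend (l + 1)
      apply this.congr
      intro N; congr 1; omega
    have h3 : Filter.Tendsto (fun N : ℕ => cfZeta α l + cfZeta α (l + 1) - cfZeta α (l + N)
        - cfZeta α (l + N + 1)) Filter.atTop (nhds (cfZeta α l + cfZeta α (l + 1))) := by
      have := (tendsto_const_nhds (x := cfZeta α l + cfZeta α (l + 1))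
        (f := Filter.atTop (α := ℕ))).sub h1 |>.sub h2
      simpa using this
    exact h3.congr (fun N => (partial_sum N).symm)
  -- value of the (a-1)ζ sum
  have hTsum : Summable (fun i : ℕ => cfZeta α (l + 1 + i)) := hsum_shift (l + 1)
  have hsplit : ∑' i : ℕ, ((cfA α (l + 1 + i) : ℝ) - 1) * cfZeta α (l + 1 + i)
      = (cfZeta α l + cfZeta α (l + 1)) - ∑' i : ℕ, cfZeta α (l + 1 + i) := by
    rw [← hAsum.tsum_eq, ← Summable.tsum_sub hAsum.summable hTsum]
    congr 1
    funext i
    ring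
  have hT2 : ∑' i : ℕ, cfZeta α (l + 1 + i)
      = cfZeta α (l + 1) + ∑' i : ℕ, cfZeta α (l + 2 + i) := by
    rw [Summable.tsum_eq_zero_add hTsum, add_zero]
    congr 1
    exact tsum_congr fun i => by rw [show l + 1 + (i + 1) = l + 2 + i from by omega]
  have hD : cfZeta α l - ∑' i : ℕ, ((cfA α (l + 1 + i) : ℝ) - 1) * cfZeta α (l + 1 + i)
      = ∑' i : ℕ, cfZeta α (l + 2 + i) := by
    rw [hsplit, hT2]; ring
  have hDpos : 0 < cfZeta α l - ∑' i : ℕ, ((cfA α (l + 1 + i) : ℝ) - 1) * cfZeta α (l + 1 + i) := by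
    rw [hD]
    exact Summable.tsum_pos (hsum_shift (l + 2)) (fun i => (hζpos _).le) 0 (hζpos _)
  refine ⟨S1, S2, ?_, hDpos⟩
  -- main inequality
  have hzsum : Summable (fun i : ℕ => (z (l + i) : ℝ) * cfZeta α (l + i)) := S1.of_abs
  have hBsum : Summable (fun i : ℕ => (z (l + 1 + i) : ℝ) * cfZeta α (l + 1 + i)) := by
    have := (summable_nat_add_iff 1).mpr hzsum
    apply this.congr
    intro i
    have h3 : l + (i + 1) = l + 1 + i := by omega
    simp only [h3]
  have hBabs : Summable (fun i : ℕ => |(z (l + 1 + i) : ℝ) * cfZeta α (l + 1 + i)|) := by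
    have := (summable_nat_add_iff 1).mpr S1
    apply this.congr
    intro i
    have h3 : l + (i + 1) = l + 1 + i := by omega
    simp only [h3]
  have hsplitz : ∑' i : ℕ, (z (l + i) : ℝ) * cfZeta α (l + i)
      = (z l : ℝ) * cfZeta α l + ∑' i : ℕ, (z (l + 1 + i) : ℝ) * cfZeta α (l + 1 + i) := by
    rw [Summable.tsum_eq_zero_add hzsum, add_zero]
    congr 1
    exact tsum_congr fun i => by rw [show l + (i + 1) = l + 1 + i from by omega]
  set A := (z l : ℝ) * cfZeta α l with hA'
  set B := ∑' i : ℕ, (z (l + 1 + i) : ℝ) * cfZeta α (l + 1 + i) with hB'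
  have habs1 : |A| - |B| ≤ |A + B| := by
    have h := abs_sub_abs_le_abs_sub A (-B)
    rwa [abs_neg, sub_neg_eq_add] at h
  have hAge : cfZeta α l ≤ |A| := by
    rw [abs_mul, abs_of_pos (hζpos l)]
    have h1 : (1:ℤ) ≤ |z l| := Int.one_le_abs hzl
    have : (1:ℝ) ≤ |(z l : ℝ)| := by
      calc (1:ℝ) = ((1:ℤ):ℝ) := by norm_num
        _ ≤ ((|z l| : ℤ) : ℝ) := by exact_mod_cast h1
        _ = |(z l : ℝ)| := by push_cast; rfl
    nlinarith [(hζpos l).le]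
  have hBle : |B| ≤ ∑' i : ℕ, ((cfA α (l + 1 + i) : ℝ) - 1) * cfZeta α (l + 1 + i) := by
    have h1 : |B| ≤ ∑' i : ℕ, |(z (l + 1 + i) : ℝ) * cfZeta α (l + 1 + i)| := by
      have := norm_tsum_le_tsum_norm
        (f := fun i : ℕ => (z (l + 1 + i) : ℝ) * cfZeta α (l + 1 + i))
        (by simpa only [Real.norm_eq_abs] using hBabs)
      simpa only [Real.norm_eq_abs] using this
    refine h1.trans (Summable.tsum_le_tsum ?_ hBabs S2)
    intro i
    rw [abs_mul, abs_of_pos (hζpos (l + 1 + i))]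
    have := hzle (l + 1 + i) (by omega)
    nlinarith [(hζpos (l + 1 + i)).le]
  rw [hsplitz]
  have : cfZeta α l - ∑' i : ℕ, ((cfA α (l + 1 + i) : ℝ) - 1) * cfZeta α (l + 1 + i) ≤ |A| - |B| := by
    linarith
  linarith [habs1, this]
end

section
/- If (z_k)_{k≥1} is a sequence of integers with |z_k| < a_k for every k ≥ 1 and the (absolutely convergent) series ∑_{k=1}^∞ z_k ζ_k is an integer (i.e., ∑_{k=1}^∞ z_k ζ_k ≡ 0 (mod 1)), then z_k = 0 for every k, where ζ_j = |q_j α − p_j|. -/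
open scoped BigOperators

namespace AllZeroAux

/-- iterates of the Gauss map starting at `fract α` -/
noncomputable def gx (α : ℝ) (k : ℕ) : ℝ := gaussMap^[k] (Int.fract α)

lemma gx_succ (α : ℝ) (k : ℕ) : gx α (k + 1) = Int.fract (1 / gx α k) := by
  simp [gx, Function.iterate_succ_apply', gaussMap]

lemma gx_props {α : ℝ} (hα : Irrational α) :
    ∀ k, Irrational (gx α k) ∧ 0 < gx α k ∧ gx α k < 1 := by
  intro k
  induction k with
  | zero =>
    have h1 : Irrational (Int.fract α) := by
      rw [Int.fract]; exact hα.sub_intCast ⌊α⌋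
    exact ⟨h1, (Int.fract_nonneg α).lt_of_ne (Ne.symm h1.ne_zero), Int.fract_lt_one α⟩
  | succ k ih =>
    obtain ⟨h1, h2, h3⟩ := ih
    have h4 : Irrational (1 / gx α k) := by
      rw [one_div]; exact h1.inv
    have h5 : Irrational (gx α (k + 1)) := by
      rw [gx_succ, Int.fract]; exact h4.sub_intCast _
    rw [gx_succ]
    exact ⟨by rwa [← gx_succ], (Int.fract_nonneg _).lt_of_ne
      (Ne.symm (by rw [← gx_succ]; exact h5.ne_zero)), Int.fract_lt_one _⟩

lemma cfA_succ (α : ℝ) (k : ℕ) : cfA α (k + 1) = ⌊1 / gx α k⌋ := rfl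

lemma one_le_cfA {α : ℝ} (hα : Irrational α) (k : ℕ) : 1 ≤ cfA α (k + 1) := by
  obtain ⟨_, h2, h3⟩ := gx_props hα k
  rw [cfA_succ]
  exact Int.le_floor.2 (by rw [Int.cast_one, le_div_iff₀ h2, one_mul]; exact h3.le)

lemma gx_succ_eq (α : ℝ) (k : ℕ) :
    gx α (k + 1) = 1 / gx α k - (cfA α (k + 1) : ℝ) := by
  rw [gx_succ, cfA_succ, Int.fract]

/-- signed version of `ζ`. -/
noncomputable def E (α : ℝ) (k : ℕ) : ℝ :=
  (-1 : ℝ) ^ (k + 1) * ((cfQ α k : ℝ) * α - (cfP α k : ℝ))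

lemma E_zero (α : ℝ) : E α 0 = 1 := by simp [E, cfQ, cfP]

lemma E_rec (α : ℝ) (k : ℕ) :
    E α (k + 2) = E α k - (cfA α (k + 1) : ℝ) * E α (k + 1) := by
  simp only [E, cfQ, cfP]
  push_cast
  ring

lemma E_succ {α : ℝ} (hα : Irrational α) : ∀ k, E α (k + 1) = gx α k * E α k := by
  intro k
  induction k with
  | zero =>
    simp only [E, cfQ, cfP, cfA]
    have : gx α 0 = α - (⌊α⌋ : ℝ) := by rw [gx, Function.iterate_zero_apply, Int.fract]
    rw [this]; push_cast; ring
  | succ k ih =>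
    have hx := (gx_props hα k).2.1.ne'
    rw [E_rec, ih, gx_succ_eq]
    field_simp

lemma E_pos {α : ℝ} (hα : Irrational α) : ∀ k, 0 < E α k := by
  intro k
  induction k with
  | zero => rw [E_zero]; norm_num
  | succ k ih => rw [E_succ hα]; exact mul_pos (gx_props hα k).2.1 ih

lemma zeta_eq {α : ℝ} (hα : Irrational α) (k : ℕ) : cfZeta α k = E α k := by
  have h : cfZeta α k = |E α k| := by
    rw [cfZeta, E, abs_mul, abs_pow, abs_neg, abs_one, one_pow, one_mul]
  rw [h, abs_of_pos (E_pos hα k)]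

lemma zeta_pos {α : ℝ} (hα : Irrational α) (k : ℕ) : 0 < cfZeta α k := by
  rw [zeta_eq hα]; exact E_pos hα k

lemma zeta_zero (α : ℝ) : cfZeta α 0 = 1 := by simp [cfZeta, cfQ, cfP]

lemma zeta_rec {α : ℝ} (hα : Irrational α) (k : ℕ) :
    cfZeta α (k + 2) = cfZeta α k - (cfA α (k + 1) : ℝ) * cfZeta α (k + 1) := by
  rw [zeta_eq hα, zeta_eq hα, zeta_eq hα]; exact E_rec α k

lemma zeta_succ_lt {α : ℝ} (hα : Irrational α) (k : ℕ) :
    cfZeta α (k + 1) < cfZeta α k := by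
  rw [zeta_eq hα, zeta_eq hα, E_succ hα]
  have := (gx_props hα k).2.2
  nlinarith [E_pos hα k, (gx_props hα k).2.1]

lemma zeta_half {α : ℝ} (hα : Irrational α) (k : ℕ) :
    cfZeta α (k + 2) ≤ cfZeta α k / 2 := by
  have h1 := zeta_rec hα k
  have h2 : (1 : ℝ) ≤ (cfA α (k + 1) : ℝ) := by exact_mod_cast one_le_cfA hα k
  have h3 := zeta_pos hα (k + 1)
  have h4 := zeta_succ_lt hα (k + 1)
  nlinarith

lemma zeta_even_le {α : ℝ} (hα : Irrational α) :
    ∀ k, cfZeta α (2 * k) ≤ (2⁻¹ : ℝ) ^ k := by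
  intro k
  induction k with
  | zero => simp [zeta_zero]
  | succ k ih =>
    have h : 2 * (k + 1) = 2 * k + 2 := by ring
    rw [h]
    calc cfZeta α (2 * k + 2) ≤ cfZeta α (2 * k) / 2 := zeta_half hα _
      _ ≤ (2⁻¹ : ℝ) ^ k / 2 := by linarith
      _ = (2⁻¹ : ℝ) ^ (k + 1) := by rw [pow_succ]; ring

lemma summable_zeta {α : ℝ} (hα : Irrational α) : Summable (cfZeta α) := by
  have hg : Summable (fun k : ℕ => (2⁻¹ : ℝ) ^ k) :=
    summable_geometric_of_lt_one (by norm_num) (by norm_num)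
  refine Summable.even_add_odd ?_ ?_
  · exact hg.of_nonneg_of_le (fun k => (zeta_pos hα _).le) (fun k => zeta_even_le hα k)
  · refine hg.of_nonneg_of_le (fun k => (zeta_pos hα _).le) (fun k => ?_)
    exact le_trans (zeta_succ_lt hα (2 * k)).le (zeta_even_le hα k)

lemma summable_zeta_add {α : ℝ} (hα : Irrational α) (j : ℕ) :
    Summable (fun i => cfZeta α (i + j)) :=
  (summable_nat_add_iff j).2 (summable_zeta hα)

lemma azeta_eq {α : ℝ} (hα : Irrational α) (j : ℕ) (i : ℕ) :
    (cfA α (i + j + 1) : ℝ) * cfZeta α (i + j + 1) = cfZeta α (i + j) - cfZeta α (i + j + 2) := by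
  have := zeta_rec hα (i + j)
  linarith

lemma summable_azeta {α : ℝ} (hα : Irrational α) (j : ℕ) :
    Summable (fun i => (cfA α (i + j + 1) : ℝ) * cfZeta α (i + j + 1)) := by
  have : (fun i => (cfA α (i + j + 1) : ℝ) * cfZeta α (i + j + 1))
      = fun i => cfZeta α (i + j) - cfZeta α (i + j + 2) := by
    funext i; exact azeta_eq hα j i
  rw [this]
  exact (summable_zeta_add hα j).sub ((summable_zeta_add hα (j + 2)).congr
    fun i => by rw [show i + (j + 2) = i + j + 2 by omega])

lemma tsum_zeta_shift {α : ℝ} (hα : Irrational α) (j : ℕ) :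
    (∑' i, cfZeta α (i + j)) = cfZeta α j + (∑' i, cfZeta α (i + (j + 1))) := by
  rw [Summable.tsum_eq_zero_add (summable_zeta_add hα j)]
  have h1 : cfZeta α (0 + j) = cfZeta α j := by rw [Nat.zero_add]
  have h2 : (∑' i : ℕ, cfZeta α (i + 1 + j)) = ∑' i : ℕ, cfZeta α (i + (j + 1)) :=
    tsum_congr fun i => by rw [show i + 1 + j = i + (j + 1) by omega]
  rw [h1, h2]

lemma tsum_azeta {α : ℝ} (hα : Irrational α) (j : ℕ) :
    (∑' i, (cfA α (i + j + 1) : ℝ) * cfZeta α (i + j + 1))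
      = cfZeta α j + cfZeta α (j + 1) := by
  have h1 : (∑' i, (cfA α (i + j + 1) : ℝ) * cfZeta α (i + j + 1))
      = (∑' i, cfZeta α (i + j)) - (∑' i, cfZeta α (i + (j + 2))) := by
    rw [← Summable.tsum_sub (summable_zeta_add hα j) (summable_zeta_add hα (j + 2))]
    refine tsum_congr fun i => ?_
    rw [azeta_eq hα j i, show i + (j + 2) = i + j + 2 by omega]
  have h3 : (∑' i : ℕ, cfZeta α (i + (j + 1 + 1))) = ∑' i : ℕ, cfZeta α (i + (j + 2)) :=
    tsum_congr fun i => by rw [show i + (j + 1 + 1) = i + (j + 2) by omega]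
  rw [h1, tsum_zeta_shift hα j, tsum_zeta_shift hα (j + 1), h3]
  ring

end AllZeroAux

open AllZeroAux in
/-- If the integers `z k` (for `k ≥ 1`) satisfy `|z k| < a k` and
`∑_{k=1}^∞ z k ζ k ≡ 0 (mod 1)`, then all `z k` vanish. -/
theorem all_zero (α : ℝ) (hα : Irrational α) (z : ℕ → ℤ)
    (hz : ∀ k, 1 ≤ k → |z k| < cfA α k)
    (hsum : ∃ m : ℤ, (∑' k : ℕ, (z (k + 1) : ℝ) * cfZeta α (k + 1)) = (m : ℝ)) :
    ∀ k, 1 ≤ k → z k = 0 := by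
  -- bounds on z in ℝ
  have hzb : ∀ k : ℕ, |(z (k + 1) : ℝ)| ≤ (cfA α (k + 1) : ℝ) - 1 := by
    intro k
    have h := hz (k + 1) (by omega)
    have h2 : |z (k + 1)| ≤ cfA α (k + 1) - 1 := by omega
    calc |(z (k + 1) : ℝ)| = ((|z (k + 1)| : ℤ) : ℝ) := Int.cast_abs.symm
      _ ≤ ((cfA α (k + 1) - 1 : ℤ) : ℝ) := by exact_mod_cast h2
      _ = (cfA α (k + 1) : ℝ) - 1 := by push_cast; ring
  -- summability of the z-weighted series, for every shift
  have hzsum : ∀ j : ℕ, Summable (fun i => (z (i + j + 1) : ℝ) * cfZeta α (i + j + 1)) := by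
    intro j
    refine (summable_azeta hα j).of_norm_bounded fun i => ?_
    rw [norm_mul, Real.norm_eq_abs, Real.norm_eq_abs, abs_of_pos (zeta_pos hα _)]
    have h1 : |(z (i + j + 1) : ℝ)| ≤ (cfA α (i + j + 1) : ℝ) := by
      have := hzb (i + j); linarith
    exact mul_le_mul_of_nonneg_right h1 (zeta_pos hα (i + j + 1)).le
  -- the key tail bound
  have tail_bound : ∀ j : ℕ,
      |∑' i, (z (i + j + 1) : ℝ) * cfZeta α (i + j + 1)| < cfZeta α j := by
    intro j
    have habs : |∑' i, (z (i + j + 1) : ℝ) * cfZeta α (i + j + 1)|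
        ≤ ∑' i, ((cfA α (i + j + 1) : ℝ) - 1) * cfZeta α (i + j + 1) := by
      calc |∑' i, (z (i + j + 1) : ℝ) * cfZeta α (i + j + 1)|
          ≤ ∑' i, ‖(z (i + j + 1) : ℝ) * cfZeta α (i + j + 1)‖ := by
            exact norm_tsum_le_tsum_norm ((hzsum j).norm)
        _ ≤ ∑' i, ((cfA α (i + j + 1) : ℝ) - 1) * cfZeta α (i + j + 1) := by
            refine Summable.tsum_le_tsum (fun i => ?_) ((hzsum j).norm) ?_
            · rw [norm_mul, Real.norm_eq_abs, Real.norm_eq_abs,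
                abs_of_pos (zeta_pos hα _)]
              exact mul_le_mul_of_nonneg_right (hzb (i + j)) (zeta_pos hα _).le
            · exact ((summable_azeta hα j).sub ((summable_zeta_add hα (j + 1)).congr
                (fun i => by rw [show i + (j + 1) = i + j + 1 by omega]))).congr
                (fun i => by ring)
    have hsub : (∑' i, ((cfA α (i + j + 1) : ℝ) - 1) * cfZeta α (i + j + 1))
        = (∑' i, (cfA α (i + j + 1) : ℝ) * cfZeta α (i + j + 1))
          - (∑' i, cfZeta α (i + (j + 1))) := by
      rw [← Summable.tsum_sub (summable_azeta hα j) (summable_zeta_add hα (j + 1))]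
      refine tsum_congr fun i => ?_
      rw [show i + (j + 1) = i + j + 1 by omega]; ring
    have hZ : cfZeta α (j + 1) + (∑' i, cfZeta α (i + (j + 2))) = ∑' i, cfZeta α (i + (j + 1)) :=
      (tsum_zeta_shift hα (j + 1)).symm
    have hpos : 0 < ∑' i, cfZeta α (i + (j + 2)) :=
      Summable.tsum_pos (summable_zeta_add hα (j + 2)) (fun i => (zeta_pos hα _).le) 0 (zeta_pos hα _)
    calc |∑' i, (z (i + j + 1) : ℝ) * cfZeta α (i + j + 1)|
        ≤ _ := habs
      _ = (∑' i, (cfA α (i + j + 1) : ℝ) * cfZeta α (i + j + 1))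
            - (∑' i, cfZeta α (i + (j + 1))) := hsub
      _ = cfZeta α j + cfZeta α (j + 1)
            - (∑' i, cfZeta α (i + (j + 1))) := by rw [tsum_azeta hα j]
      _ < cfZeta α j := by
          rw [← hZ]; linarith
  -- Step 1: the sum is 0
  obtain ⟨m, hm⟩ := hsum
  have hS0 : (∑' k : ℕ, (z (k + 1) : ℝ) * cfZeta α (k + 1)) = 0 := by
    have h0 := tail_bound 0
    simp only [Nat.add_zero] at h0
    rw [hm] at h0 ⊢
    rw [zeta_zero] at h0
    have hm0 : m = 0 := by
      have h1 : ((|m| : ℤ) : ℝ) < 1 := by rw [Int.cast_abs]; exact h0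
      have h2 : |m| < 1 := by exact_mod_cast h1
      have h4 := abs_lt.mp h2
      omega
    simp [hm0]
  -- Step 2: minimal nonzero index leads to a contradiction
  by_contra hcon
  push_neg at hcon
  obtain ⟨k₀, hk₀1, hk₀⟩ := hcon
  have hex : ∃ n : ℕ, z (n + 1) ≠ 0 := ⟨k₀ - 1, by rwa [Nat.sub_add_cancel hk₀1]⟩
  classical
  let n := Nat.find hex
  have hn : z (n + 1) ≠ 0 := Nat.find_spec hex
  have hmin : ∀ i < n, z (i + 1) = 0 := fun i hi => by
    by_contra h; exact absurd hi (Nat.not_lt.mpr (Nat.find_le h))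
  -- split off the first n terms (all zero)
  have hF : Summable (fun k : ℕ => (z (k + 1) : ℝ) * cfZeta α (k + 1)) := by
    have := hzsum 0
    simpa using this
  have hsplit := (Summable.sum_add_tsum_nat_add n hF).symm
  have hzero : (∑ i ∈ Finset.range n, (z (i + 1) : ℝ) * cfZeta α (i + 1)) = 0 := by
    refine Finset.sum_eq_zero fun i hi => ?_
    rw [hmin i (Finset.mem_range.mp hi)]
    simp
  rw [hS0, hzero, zero_add] at hsplit
  -- hsplit : 0 = ∑' i, z (i + n + 1) * ζ (i + n + 1)
  have hshift : Summable (fun i : ℕ => (z (i + n + 1) : ℝ) * cfZeta α (i + n + 1)) := hzsum n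
  rw [Summable.tsum_eq_zero_add hshift] at hsplit
  -- 0 = z (n+1) ζ (n+1) + ∑' i, z (i+1+n+1) ζ (i+1+n+1)
  have hre : (∑' i : ℕ, (z (i + 1 + n + 1) : ℝ) * cfZeta α (i + 1 + n + 1))
      = ∑' i : ℕ, (z (i + (n + 1) + 1) : ℝ) * cfZeta α (i + (n + 1) + 1) := by
    refine tsum_congr fun i => ?_
    rw [show i + 1 + n + 1 = i + (n + 1) + 1 by omega]
  rw [hre] at hsplit
  simp only [Nat.zero_add] at hsplit
  have htb := tail_bound (n + 1)
  have h1 : (1 : ℝ) ≤ |(z (n + 1) : ℝ)| := by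
    rw [← Int.cast_abs]
    exact_mod_cast Int.one_le_abs hn
  have hzpos := zeta_pos hα (n + 1)
  have : |(z (n + 1) : ℝ) * cfZeta α (n + 1)|
      = |∑' i : ℕ, (z (i + (n + 1) + 1) : ℝ) * cfZeta α (i + (n + 1) + 1)| := by
    rw [show (z (n + 1) : ℝ) * cfZeta α (n + 1)
        = -(∑' i : ℕ, (z (i + (n + 1) + 1) : ℝ) * cfZeta α (i + (n + 1) + 1)) by linarith,
      abs_neg]
  rw [abs_mul, abs_of_pos hzpos] at this
  nlinarith [abs_nonneg ((z (n + 1) : ℝ))]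
end
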